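/- Let p ≥ 1 and let A_1,…,A_p, B_1,…,B_p be strictly positive reals with 1/A_1 ≤ 1/A_2 ≤ … ≤ 1/A_p, 1/B_1 ≤ 1/B_2 ≤ … ≤ 1/B_p, and Σ_{i=1}^k 1/A_i ≤ Σ_{i=1}^k 1/B_i for every k = 1,…,p. Then Σ_{j=1}^p B_j ≤ Σ_{j=1}^p A_j, and equality Σ_{j=1}^p B_j = Σ_{j=1}^p A_j holds if and only if (B_1,…,B_p) is a permutation of (A_1,…,A_p). -/

import Mathlib

open Finset

lemma abel_id (c d : ℕ → ℝ) : ∀ n : ℕ,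
    ∑ i ∈ range (n+1), d i * c i
      = (∑ i ∈ range n, (c i - c (i+1)) * (∑ j ∈ range (i+1), d j))
        + c n * ∑ j ∈ range (n+1), d j := by
  intro n
  induction n with
  | zero => simp [mul_comm]
  | succ n ih =>
    rw [sum_range_succ (f := fun i => d i * c i), ih,
      sum_range_succ (f := fun i => (c i - c (i+1)) * (∑ j ∈ range (i+1), d j)),
      sum_range_succ (f := d) (n := n+1)]
    ring

lemma iic_sum {p : ℕ} (k : Fin p) (g : ℕ → ℝ) :
    ∑ i ∈ Finset.Iic k, g i.val = ∑ i ∈ range (k.val + 1), g i := by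
  rw [show range (k.val+1) = Finset.Iic (k.val) by ext x; simp [Nat.lt_succ_iff],
    ← Fin.map_valEmbedding_Iic, Finset.sum_map]
  rfl

theorem stmt13 (p : ℕ) (hp : 1 ≤ p)
    (A B : Fin p → ℝ)
    (hA : ∀ i, 0 < A i) (hB : ∀ i, 0 < B i)
    (hiA : ∀ i j : Fin p, i ≤ j → 1 / A i ≤ 1 / A j)
    (hiB : ∀ i j : Fin p, i ≤ j → 1 / B i ≤ 1 / B j)
    (hmaj : ∀ k : Fin p, ∑ i ∈ Finset.Iic k, 1 / A i ≤ ∑ i ∈ Finset.Iic k, 1 / B i) :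
    (∑ j, B j ≤ ∑ j, A j) ∧
      ((∑ j, B j = ∑ j, A j) ↔ ∃ σ : Equiv.Perm (Fin p), ∀ i, B i = A (σ i)) := by
  obtain ⟨n, hpn⟩ : ∃ n, p = n + 1 := ⟨p - 1, by omega⟩
  set A' : ℕ → ℝ := fun i => if h : i < p then A ⟨i, h⟩ else 1 with hA'
  set B' : ℕ → ℝ := fun i => if h : i < p then B ⟨i, h⟩ else 1 with hB'
  have hA'eq : ∀ i : Fin p, A' i.val = A i := fun i => by simp [hA', i.isLt]
  have hB'eq : ∀ i : Fin p, B' i.val = B i := fun i => by simp [hB', i.isLt]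
  have hA'pos : ∀ i, 0 < A' i := by
    intro i; simp only [hA']; split
    · exact hA _
    · norm_num
  have hB'pos : ∀ i, 0 < B' i := by
    intro i; simp only [hB']; split
    · exact hB _
    · norm_num
  set d : ℕ → ℝ := fun i => 1 / B' i - 1 / A' i with hd
  set c : ℕ → ℝ := fun i => A' i * B' i with hc
  set S : ℕ → ℝ := fun k => ∑ j ∈ range (k+1), d j with hS
  have hcpos : ∀ i, 0 < c i := fun i => mul_pos (hA'pos i) (hB'pos i)
  -- A' antitone on range
  have hAmono : ∀ i, i + 1 < p → A' (i+1) ≤ A' i := by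
    intro i h
    have h1 : (⟨i, by omega⟩ : Fin p) ≤ ⟨i+1, h⟩ := by simp [Fin.le_def]
    have := hiA ⟨i, by omega⟩ ⟨i+1, h⟩ h1
    rw [← hA'eq ⟨i, by omega⟩, ← hA'eq ⟨i+1, h⟩] at this
    exact (one_div_le_one_div (hA'pos i) (hA'pos (i+1))).mp this
  have hBmono : ∀ i, i + 1 < p → B' (i+1) ≤ B' i := by
    intro i h
    have h1 : (⟨i, by omega⟩ : Fin p) ≤ ⟨i+1, h⟩ := by simp [Fin.le_def]
    have := hiB ⟨i, by omega⟩ ⟨i+1, h⟩ h1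
    rw [← hB'eq ⟨i, by omega⟩, ← hB'eq ⟨i+1, h⟩] at this
    exact (one_div_le_one_div (hB'pos i) (hB'pos (i+1))).mp this
  have hcmono : ∀ i, i + 1 < p → c (i+1) ≤ c i := by
    intro i h
    have hA1 := hAmono i h; have hB1 := hBmono i h
    have := (hA'pos (i+1)); have := (hB'pos (i+1))
    simp only [hc]
    nlinarith
  -- partial sums nonneg
  have hSnn : ∀ k, k < p → 0 ≤ S k := by
    intro k hk
    have h1 := hmaj ⟨k, hk⟩
    have e1 : ∑ i ∈ Finset.Iic (⟨k, hk⟩ : Fin p), 1 / A i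
        = ∑ i ∈ range (k+1), 1 / A' i := by
      rw [← iic_sum (⟨k, hk⟩ : Fin p) (fun m => 1 / A' m)]
      exact Finset.sum_congr rfl fun i _ => by rw [hA'eq i]
    have e2 : ∑ i ∈ Finset.Iic (⟨k, hk⟩ : Fin p), 1 / B i
        = ∑ i ∈ range (k+1), 1 / B' i := by
      rw [← iic_sum (⟨k, hk⟩ : Fin p) (fun m => 1 / B' m)]
      exact Finset.sum_congr rfl fun i _ => by rw [hB'eq i]
    rw [e1, e2] at h1
    have : S k = ∑ i ∈ range (k+1), 1 / B' i - ∑ i ∈ range (k+1), 1 / A' i := by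
      simp [hS, hd, Finset.sum_sub_distrib]
    linarith
  -- pointwise identity
  have hdc : ∀ i, d i * c i = A' i - B' i := by
    intro i
    have h1 := (hA'pos i).ne'; have h2 := (hB'pos i).ne'
    have e : d i * c i = A' i * (B' i / B' i) - B' i * (A' i / A' i) := by
      simp only [hd, hc]; ring
    rw [e, div_self h2, div_self h1]; ring
  -- sum conversions
  have hsumA : ∑ j, A j = ∑ i ∈ range p, A' i := by
    rw [← Fin.sum_univ_eq_sum_range A' p]
    exact Finset.sum_congr rfl fun i _ => (hA'eq i).symm
  have hsumB : ∑ j, B j = ∑ i ∈ range p, B' i := by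
    rw [← Fin.sum_univ_eq_sum_range B' p]
    exact Finset.sum_congr rfl fun i _ => (hB'eq i).symm
  have hdiff : ∑ j, A j - ∑ j, B j
      = (∑ i ∈ range n, (c i - c (i+1)) * S i) + c n * S n := by
    have h1 : ∑ i ∈ range p, d i * c i = ∑ i ∈ range p, (A' i - B' i) :=
      Finset.sum_congr rfl fun i _ => hdc i
    have h2 := abel_id c d n
    rw [hsumA, hsumB, ← Finset.sum_sub_distrib, ← h1, hpn, h2]
  have hterm : ∀ i ∈ range n, 0 ≤ (c i - c (i+1)) * S i := by
    intro i hi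
    rw [Finset.mem_range] at hi
    have h1 : i + 1 < p := by omega
    exact mul_nonneg (by linarith [hcmono i h1]) (hSnn i (by omega))
  have hlast : 0 ≤ c n * S n := mul_nonneg (hcpos n).le (hSnn n (by omega))
  have hmain : ∑ j, B j ≤ ∑ j, A j := by
    have := Finset.sum_nonneg hterm
    linarith [hdiff]
  refine ⟨hmain, ?_, ?_⟩
  · -- equality → permutation
    intro heq
    have hzero : (∑ i ∈ range n, (c i - c (i+1)) * S i) + c n * S n = 0 := by
      rw [← hdiff, heq]; ring
    have hsum0 : ∑ i ∈ range n, (c i - c (i+1)) * S i = 0 := by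
      have := Finset.sum_nonneg hterm
      linarith
    have hSn : S n = 0 := by
      have hcn := hcpos n
      have : c n * S n = 0 := by linarith
      rcases mul_eq_zero.mp this with h | h
      · exact absurd h hcn.ne'
      · exact h
    have hterm0 : ∀ i ∈ range n, (c i - c (i+1)) * S i = 0 :=
      (Finset.sum_eq_zero_iff_of_nonneg hterm).mp hsum0
    -- key structural fact
    have F : ∀ i, i < n → 0 < S i → A' (i+1) = A' i ∧ B' (i+1) = B' i := by
      intro i hi hSi
      have h0 := hterm0 i (Finset.mem_range.mpr hi)
      have hceq : c i = c (i+1) := by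
        rcases mul_eq_zero.mp h0 with h | h
        · linarith
        · exact absurd h hSi.ne'
      have h1 : i + 1 < p := by omega
      have hA1 := hAmono i h1; have hB1 := hBmono i h1
      have hAp := hA'pos i; have hBp := hB'pos i
      have hAp1 := hA'pos (i+1); have hBp1 := hB'pos (i+1)
      simp only [hc] at hceq
      constructor <;> nlinarith
    -- show pointwise equality
    have hAB : ∀ i, i < p → A' i = B' i := by
      by_contra hcon
      push_neg at hcon
      obtain ⟨j0, hj0p, hj0⟩ := hcon
      have hex : ∃ j, j < p ∧ A' j ≠ B' j := ⟨j0, hj0p, hj0⟩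
      -- minimal such j
      obtain ⟨j, ⟨hjp, hj⟩, hjmin⟩ := Nat.findX hex
      have hdj0 : ∀ m, m < j → d m = 0 := by
        intro m hm
        have : A' m = B' m := by
          by_contra h
          exact absurd ⟨by omega, h⟩ (hjmin m hm)
        simp [hd, this]
      have hSj : S j = d j := by
        have : S j = ∑ m ∈ range j, d m + d j := sum_range_succ d j
        rw [this, Finset.sum_eq_zero (fun m hm => hdj0 m (Finset.mem_range.mp hm))]
        ring
      have hdjne : d j ≠ 0 := by
        simp only [hd, sub_ne_zero]
        intro h
        exact hj (by
          have := (hA'pos j).ne'; have := (hB'pos j).ne'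
          field_simp at h
          linarith)
      have hSjpos : 0 < S j := lt_of_le_of_ne (hSnn j hjp) (fun h => hdjne (by rw [← hSj, ← h]))
      -- maximal k0 with S k0 > 0
      have hTne : ((range p).filter (fun k => 0 < S k)).Nonempty :=
        ⟨j, Finset.mem_filter.mpr ⟨Finset.mem_range.mpr hjp, hSjpos⟩⟩
      set k0 := ((range p).filter (fun k => 0 < S k)).max' hTne with hk0def
      have hk0mem := ((range p).filter (fun k => 0 < S k)).max'_mem hTne
      rw [Finset.mem_filter, Finset.mem_range] at hk0mem
      obtain ⟨hk0p, hSk0⟩ := hk0mem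
      rw [← hk0def] at hk0p hSk0
      have hmax : ∀ m, m < p → k0 < m → S m = 0 := by
        intro m hmp hkm
        rcases eq_or_lt_of_le (hSnn m hmp) with h | h
        · exact h.symm
        · have hle := Finset.le_max' ((range p).filter (fun k => 0 < S k)) m
            (Finset.mem_filter.mpr ⟨Finset.mem_range.mpr hmp, h⟩)
          rw [← hk0def] at hle
          omega
      have hk0n : k0 < n := by
        rcases lt_or_eq_of_le (show k0 ≤ n by omega) with h | h
        · exact h
        · rw [h, hSn] at hSk0
          exact absurd hSk0 (lt_irrefl 0)
      have hSk01 : S (k0+1) = 0 := hmax (k0+1) (by omega) (by omega)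
      have hdk01 : d (k0+1) = -S k0 := by
        have : S (k0+1) = S k0 + d (k0+1) := sum_range_succ d (k0+1)
        rw [hSk01] at this; linarith
      have hdk01neg : d (k0+1) < 0 := by rw [hdk01]; linarith
      -- downward induction
      have claim : ∀ m, m ≤ k0 → 0 < S (k0 - m) ∧ d (k0 - m) = d (k0 + 1) := by
        intro m
        induction m with
        | zero =>
          intro _
          refine ⟨by simpa using hSk0, ?_⟩
          obtain ⟨hAe, hBe⟩ := F k0 hk0n hSk0
          simp [hd, hAe, hBe]
        | succ m ih =>
          intro hm
          obtain ⟨hSpos, hdeq⟩ := ih (by omega)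
          have hj' : k0 - (m+1) + 1 = k0 - m := by omega
          have hstep : S (k0 - m) = S (k0 - (m+1)) + d (k0 - m) := by
            have h2 : k0 - (m+1) + 1 = k0 - m := by omega
            simp only [hS]
            rw [h2]
            exact sum_range_succ d (k0 - m)
          have hSj'pos : 0 < S (k0 - (m+1)) := by
            rw [hdeq] at hstep
            have := hdk01neg
            linarith
          refine ⟨hSj'pos, ?_⟩
          obtain ⟨hAe, hBe⟩ := F (k0 - (m+1)) (by omega) hSj'pos
          have : d (k0 - (m+1)) = d (k0 - (m+1) + 1) := by simp [hd, hAe, hBe]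
          rw [this, hj', hdeq]
      obtain ⟨hS0, hd0⟩ := claim k0 (le_refl k0)
      simp only [Nat.sub_self] at hS0 hd0
      have : S 0 = d 0 := by simp [hS]
      rw [this, hd0] at hS0
      linarith
    -- conclude B = A
    refine ⟨Equiv.refl _, fun i => ?_⟩
    have := hAB i.val i.isLt
    rw [hA'eq i, hB'eq i] at this
    simpa using this.symm
  · -- permutation → equality
    rintro ⟨σ, hσ⟩
    calc ∑ j, B j = ∑ j, A (σ j) := Finset.sum_congr rfl fun j _ => hσ j
      _ = ∑ j, A j := Equiv.sum_comp σ A
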